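/- The map T: [0,1] → [0,1] with Tx = x/4 for x ∈ [0,1/2] and Tx = x/5 for x ∈ (1/2,1] satisfies d(Tx,Ty) ≤ (1/3)(d(x,Tx) + d(y,Ty)) for all x, y ∈ [0,1], but does not satisfy (CM_B): there exist x ≠ y with |Tx − Ty| > |x − y|. -/

import Mathlib

noncomputable def T7 (x : ℝ) : ℝ := if x ≤ 1 / 2 then x / 4 else x / 5

theorem stmt_7 :
    (∀ x ∈ Set.Icc (0 : ℝ) 1, ∀ y ∈ Set.Icc (0 : ℝ) 1,
      dist (T7 x) (T7 y) ≤ (dist x (T7 x) + dist y (T7 y)) / 3) ∧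
    (∃ x ∈ Set.Icc (0 : ℝ) 1, ∃ y ∈ Set.Icc (0 : ℝ) 1, x ≠ y ∧
      dist (T7 x) (T7 y) > dist x y) := by
  constructor
  · intro x hx y hy
    obtain ⟨hx0, hx1⟩ := hx
    obtain ⟨hy0, hy1⟩ := hy
    simp only [T7, Real.dist_eq]
    split_ifs with h1 h2 h2 <;>
    · rw [abs_sub_le_iff]
      constructor <;>
      · rw [abs_of_nonneg (by linarith), abs_of_nonneg (by linarith)]
        linarith
  · refine ⟨1/2, ⟨by norm_num, by norm_num⟩, 1/2 + 1/100, ⟨by norm_num, by norm_num⟩,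
      by norm_num, ?_⟩
    simp only [T7, Real.dist_eq]
    norm_num
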